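/- Let k ≥ 1 and m ≥ 1 be integers, let x, s, z ∈ ℂ, let ω ∈ ℂ be a primitive m-th root of unity, and let R be the multiset of roots in ℂ, counted with multiplicity, of the monic polynomial X^k − x·X^{k−1} − s (so R has cardinality k). Then ∏_{j=0}^{m−1} (1 − ω^j·x·z − ω^{kj}·s·z^k) = ∏_{α∈R} (1 − α^m·z^m). -/

import Mathlib

open Polynomial

-- For any y, ∏_{j<m} (y - ω^j) = y^m - 1.
lemma prod_sub_pow_roots {m : ℕ} (hm : 1 ≤ m) {ω : ℂ} (hω : IsPrimitiveRoot ω m) (y : ℂ) :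
    ∏ j ∈ Finset.range m, (y - ω ^ j) = y ^ m - 1 := by
  have hmonic : (X ^ m - C (1 : ℂ)).Monic := monic_X_pow_sub_C 1 (by omega)
  have hroots : (X ^ m - C (1 : ℂ)).roots = (Multiset.range m).map (ω ^ ·) := by
    have := hω.nthRoots_eq (α := (1 : ℂ)) (a := (1 : ℂ)) (one_pow m)
    simpa [nthRoots] using this
  have hcard : (X ^ m - C (1 : ℂ)).roots.card = (X ^ m - C (1 : ℂ)).natDegree := by
    rw [hroots, natDegree_X_pow_sub_C]; simp
  have hfact := prod_multiset_X_sub_C_of_monic_of_roots_card_eq hmonic hcard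
  have := congrArg (eval y) hfact
  rw [eval_multiset_prod] at this
  rw [hroots] at this
  simp only [Multiset.map_map, Function.comp, eval_sub, eval_X, eval_C] at this
  rw [Finset.prod_eq_multiset_prod, Finset.range_val, this, eval_pow, eval_X]

lemma one_sub_mul_prod {m : ℕ} (hm : 1 ≤ m) {ω : ℂ} (hω : IsPrimitiveRoot ω m) (t : ℂ) :
    ∏ j ∈ Finset.range m, (1 - ω ^ j * t) = 1 - t ^ m := by
  by_cases ht : t = 0
  · simp [ht, zero_pow (by omega : m ≠ 0)]
  · have h1 : ∀ j ∈ Finset.range m, 1 - ω ^ j * t = t * (t⁻¹ - ω ^ j) := by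
      intro j _
      field_simp
    rw [Finset.prod_congr rfl h1, Finset.prod_mul_distrib, Finset.prod_const,
      Finset.card_range, prod_sub_pow_roots hm hω]
    field_simp
    rw [one_div, inv_pow, mul_sub, mul_inv_cancel₀ (pow_ne_zero m ht), mul_one]

lemma prod_swap_multiset (S : Multiset ℂ) (n : ℕ) (f : ℕ → ℂ → ℂ) :
    ∏ j ∈ Finset.range n, (S.map (f j)).prod
      = (S.map fun a => ∏ j ∈ Finset.range n, f j a).prod := by
  induction S using Multiset.induction with
  | empty => simp
  | cons a S ih => simp [Finset.prod_mul_distrib, ih]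

open Polynomial in
theorem stmt6 (k m : ℕ) (hk : 1 ≤ k) (hm : 1 ≤ m) (x s z : ℂ) (ω : ℂ)
    (hω : IsPrimitiveRoot ω m) (R : Multiset ℂ)
    (hR : R = (X ^ k - C x * X ^ (k - 1) - C s : ℂ[X]).roots) :
    ∏ j ∈ Finset.range m, (1 - ω ^ j * x * z - ω ^ (k * j) * s * z ^ k)
      = (R.map fun α => 1 - α ^ m * z ^ m).prod := by
  set P : ℂ[X] := X ^ k - C x * X ^ (k - 1) - C s with hP
  have hq : (C x * X ^ (k - 1) + C s : ℂ[X]).degree < (k : ℕ) := by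
    refine (degree_add_le _ _).trans_lt (max_lt ?_ ?_)
    · exact (degree_C_mul_X_pow_le _ _).trans_lt (by exact_mod_cast (by omega : k - 1 < k))
    · exact degree_C_le.trans_lt (by exact_mod_cast (by omega : 0 < k))
  have hP' : P = X ^ k - (C x * X ^ (k - 1) + C s) := by rw [hP]; ring
  have hmonic : P.Monic := hP' ▸ monic_X_pow_sub hq
  have hdeg : P.natDegree = k := by
    have hd : P.degree = (k : ℕ) := by
      rw [hP', degree_sub_eq_left_of_degree_lt (by rwa [degree_X_pow]), degree_X_pow]
    exact natDegree_eq_of_degree_eq_some hd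
  have hcard : Multiset.card R = k := by
    rw [hR, ← hdeg]
    exact Polynomial.splits_iff_card_roots.mp (IsAlgClosed.splits P)
  have heval : ∀ y : ℂ, (R.map fun a => y - a).prod = eval y P := by
    intro y
    have hfact := prod_multiset_X_sub_C_of_monic_of_roots_card_eq hmonic
      (by rw [← hR, hcard, hdeg])
    have h2 := congrArg (eval y) hfact
    rw [eval_multiset_prod] at h2
    rw [hR]
    simpa [Multiset.map_map, Function.comp] using h2
  have hfac : ∀ w : ℂ, w ≠ 0 →
      (R.map fun a => 1 - w * a).prod = 1 - x * w - s * w ^ k := by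
    intro w hw
    have h1 : (R.map fun a => 1 - w * a) = R.map fun a => w * (w⁻¹ - a) := by
      refine Multiset.map_congr rfl fun a _ => ?_
      field_simp
    rw [h1]
    have h2 : (R.map fun a => w * (w⁻¹ - a)).prod
        = w ^ k * (R.map fun a => w⁻¹ - a).prod := by
      rw [show (fun a : ℂ => w * (w⁻¹ - a)) = fun a => (fun _ => w) a * (w⁻¹ - a) from rfl]
      rw [Multiset.prod_map_mul]
      simp [hcard]
    rw [h2, heval, hP]
    simp only [eval_sub, eval_pow, eval_X, eval_mul, eval_C]
    have hkk : w ^ k = w ^ (k - 1) * w := by rw [← pow_succ, Nat.sub_add_cancel hk]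
    have e0 : w ^ (k - 1) * w⁻¹ ^ (k - 1) = 1 := by
      rw [← mul_pow, mul_inv_cancel₀ hw, one_pow]
    have hinv : w * w⁻¹ = 1 := mul_inv_cancel₀ hw
    have E1 : w ^ k * w⁻¹ ^ k = 1 := by rw [← mul_pow, hinv, one_pow]
    have E2 : w ^ k * (x * w⁻¹ ^ (k - 1)) = x * w := by
      rw [hkk]; linear_combination (x * w) * e0
    rw [mul_sub, mul_sub, E1, E2]
    ring
  by_cases hz : z = 0
  · simp [hz, zero_pow (by omega : k ≠ 0), zero_pow (by omega : m ≠ 0)]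
  · have hω0 : ω ≠ 0 := hω.ne_zero (by omega)
    have hstep : ∀ j ∈ Finset.range m,
        1 - ω ^ j * x * z - ω ^ (k * j) * s * z ^ k
          = (R.map fun a => 1 - (ω ^ j * z) * a).prod := by
      intro j _
      rw [hfac (ω ^ j * z) (mul_ne_zero (pow_ne_zero j hω0) hz)]
      rw [mul_pow, ← pow_mul, mul_comm j k]
      ring
    rw [Finset.prod_congr rfl hstep]
    rw [prod_swap_multiset R m fun j a => 1 - ω ^ j * z * a]
    refine congrArg Multiset.prod (Multiset.map_congr rfl fun a _ => ?_)
    calc ∏ j ∈ Finset.range m, (1 - ω ^ j * z * a)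
        = ∏ j ∈ Finset.range m, (1 - ω ^ j * (z * a)) :=
          Finset.prod_congr rfl fun j _ => by ring
      _ = 1 - (z * a) ^ m := one_sub_mul_prod hm hω _
      _ = 1 - a ^ m * z ^ m := by ring
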